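/- Let G be a discrete abelian group, 𝒜 ∈ B_LTI(ℓ²(G)^N) with transfer matrix Â, and set A_bnd ∈ M_N(ℝ) to be the matrix with entries ‖â_{m,n}‖_{L^∞(Ĝ)}. Then ‖𝒜‖ ≤ ‖A_bnd‖₂, the spectral norm of A_bnd. -/

import Mathlib

open MeasureTheory Complex
open scoped ENNReal ComplexOrder

set_option maxHeartbeats 1000000
set_option synthInstance.maxHeartbeats 400000

noncomputable section

/-- Discrete convolution of two complex-valued functions on a discrete abelian group `G`:
`(x ∗ y)(h) = ∑_{g ∈ G} x(g) y(h - g)`. -/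
def conv {G : Type*} [AddCommGroup G] (x y : G → ℂ) : G → ℂ :=
  fun h => ∑' g, x g * y (h - g)

/-- `ℓ²(G)` with complex values. -/
abbrev ell2 (G : Type*) [AddCommGroup G] : Type _ := lp (fun _ : G => ℂ) 2

theorem memℓp_translate {G : Type*} [AddCommGroup G] (g : G) (x : ell2 G) :
    Memℓp (fun h => (x : G → ℂ) (h - g)) 2 := by
  have hx : Summable (fun h : G => ‖(x : G → ℂ) h‖ ^ (2 : ℝ≥0∞).toReal) :=
    Memℓp.summable (by simp) (lp.memℓp x)
  have h2 : Summable (fun h : G => ‖(x : G → ℂ) (h - g)‖ ^ (2 : ℝ≥0∞).toReal) :=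
    (Equiv.subRight g).summable_iff.mpr hx
  exact memℓp_gen h2

/-- The translation operator `T_g` on `ℓ²(G)`: `(T_g x)(h) = x(h - g)`. -/
def translLp {G : Type*} [AddCommGroup G] (g : G) (x : ell2 G) : ell2 G :=
  ⟨fun h => (x : G → ℂ) (h - g), memℓp_translate g x⟩

/-- Spectral norm (ℓ²-operator norm) of a real square matrix. -/
def specNormR {N : ℕ} (A : Matrix (Fin N) (Fin N) ℝ) : ℝ :=
  ‖Matrix.toEuclideanCLM (𝕜 := ℝ) A‖

instance piLp_completeSpace {ι : Type*} (p : ENNReal) (α : ι → Type*)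
    [∀ i, UniformSpace (α i)] [∀ i, CompleteSpace (α i)] : CompleteSpace (PiLp p α) :=
  PiLp.completeSpace p α
/-- A bounded operator on `ℓ²(G)^N` (with values in `ℓ²(G)^M`) commutes with all
translations. -/
def LTI {G : Type*} [AddCommGroup G] {N M : ℕ}
    (T : PiLp 2 (fun _ : Fin N => ell2 G) →L[ℂ] PiLp 2 (fun _ : Fin M => ell2 G)) : Prop :=
  ∀ (g : G) (x : PiLp 2 (fun _ : Fin N => ell2 G)),
    T ((WithLp.equiv 2 _).symm fun n => translLp g (x n)) =
      (WithLp.equiv 2 _).symm fun m => translLp g (T x m)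

/-- `Λ` is the transfer matrix of `T`: each entry of `Λ` is essentially bounded and
`F(T x) = Λ ⬝ x̂` a.e. for every `x`. -/
def IsTransfer {G : Type*} [AddCommGroup G]
    {Gd : Type*} [MeasurableSpace Gd] (μ : Measure Gd)
    (F : lp (fun _ : G => ℂ) 2 ≃ₗᵢ[ℂ] Lp ℂ 2 μ) {N M : ℕ}
    (T : PiLp 2 (fun _ : Fin N => ell2 G) →L[ℂ] PiLp 2 (fun _ : Fin M => ell2 G))
    (Λ : Gd → Matrix (Fin M) (Fin N) ℂ) : Prop :=
  (∀ m n, MeasureTheory.MemLp (fun ξ => Λ ξ m n) ∞ μ) ∧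
    ∀ (x : PiLp 2 (fun _ : Fin N => ell2 G)) (m : Fin M),
      (F (T x m) : Gd → ℂ) =ᵐ[μ] fun ξ => ∑ n, Λ ξ m n * (F (x n) : Gd → ℂ) ξ

/-- Pointwise linear-algebra estimate: if `‖Λ m n‖ ≤ B m n` entrywise, then the `ℓ²` norm of
`Λ ⬝ w` is bounded by `specNormR B` times the `ℓ²` norm of `w`. -/
lemma ptwise_est {N : ℕ} (B : Matrix (Fin N) (Fin N) ℝ)
    (Λ : Matrix (Fin N) (Fin N) ℂ) (hΛ : ∀ m n, ‖Λ m n‖ ≤ B m n) (w : Fin N → ℂ) :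
    ∑ m, ‖∑ n, Λ m n * w n‖ ^ 2 ≤ (specNormR B) ^ 2 * ∑ n, ‖w n‖ ^ 2 := by
  set v : EuclideanSpace ℝ (Fin N) := (WithLp.equiv 2 _).symm (fun n => ‖w n‖) with hv
  have hmul : ∀ m, ‖∑ n, Λ m n * w n‖ ≤ B.mulVec (fun n => ‖w n‖) m := by
    intro m
    calc ‖∑ n, Λ m n * w n‖ ≤ ∑ n, ‖Λ m n * w n‖ := norm_sum_le _ _
      _ ≤ ∑ n, B m n * ‖w n‖ := Finset.sum_le_sum (fun n _ => by
            rw [norm_mul]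
            exact mul_le_mul_of_nonneg_right (hΛ m n) (norm_nonneg _))
      _ = B.mulVec (fun n => ‖w n‖) m := rfl
  have hEu : Matrix.toEuclideanCLM (𝕜 := ℝ) B v =
      (WithLp.equiv 2 _).symm (B.mulVec (fun n => ‖w n‖)) := by
    rw [hv, WithLp.equiv_symm_apply, Matrix.toEuclideanCLM_toLp]
  calc ∑ m, ‖∑ n, Λ m n * w n‖ ^ 2
      ≤ ∑ m, (B.mulVec (fun n => ‖w n‖) m) ^ 2 :=
        Finset.sum_le_sum fun m _ => pow_le_pow_left₀ (norm_nonneg _) (hmul m) 2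
    _ = ‖Matrix.toEuclideanCLM (𝕜 := ℝ) B v‖ ^ 2 := by
        rw [hEu, PiLp.norm_sq_eq_of_L2]
        simp [WithLp.equiv_symm_apply, PiLp.toLp_apply, Real.norm_eq_abs, _root_.sq_abs]
    _ ≤ (specNormR B * ‖v‖) ^ 2 := by
        apply pow_le_pow_left₀ (norm_nonneg _)
        exact (Matrix.toEuclideanCLM (𝕜 := ℝ) B).le_opNorm v
    _ = (specNormR B) ^ 2 * ∑ n, ‖w n‖ ^ 2 := by
        rw [mul_pow, PiLp.norm_sq_eq_of_L2]
        congr 1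
        refine Finset.sum_congr rfl fun n _ => ?_
        rw [hv]
        simp [WithLp.equiv_symm_apply, PiLp.toLp_apply]

/-- For `f ∈ L²`, the lintegral of `‖f ξ‖₊ ^ 2` equals `ENNReal.ofReal (‖f‖ ^ 2)`. -/
lemma lp_sq {α : Type*} [MeasurableSpace α] {μ : Measure α} (f : Lp ℂ 2 μ) :
    ∫⁻ ξ, (‖(f : α → ℂ) ξ‖₊ : ℝ≥0∞) ^ 2 ∂μ = ENNReal.ofReal (‖f‖ ^ 2) := by
  have h2 : eLpNorm (f : α → ℂ) 2 μ
      = (∫⁻ a, (‖(f : α → ℂ) a‖₊ : ℝ≥0∞) ^ (2 : ℝ) ∂μ) ^ (1 / (2 : ℝ)) := by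
    rw [eLpNorm_eq_lintegral_rpow_enorm_toReal two_ne_zero ENNReal.ofNat_ne_top]
    norm_num [enorm_eq_nnnorm]
  have hI : ∫⁻ ξ, (‖(f : α → ℂ) ξ‖₊ : ℝ≥0∞) ^ 2 ∂μ = (eLpNorm (f : α → ℂ) 2 μ) ^ 2 := by
    conv_rhs => rw [h2, ← ENNReal.rpow_natCast _ 2, ← ENNReal.rpow_mul]
    have h12 : (1 / (2 : ℝ)) * ((2 : ℕ) : ℝ) = 1 := by norm_num
    rw [h12, ENNReal.rpow_one]
    exact lintegral_congr fun a => by rw [← ENNReal.rpow_natCast]; norm_num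
  rw [hI, MeasureTheory.Lp.norm_def, ENNReal.ofReal_pow ENNReal.toReal_nonneg,
    ENNReal.ofReal_toReal (MeasureTheory.Lp.eLpNorm_ne_top f)]

/-- With `A_bnd = [‖â_{m,n}‖_{L^∞}]`, one has `‖𝒜‖ ≤ ‖A_bnd‖₂`. -/
theorem stmt_9 {G : Type*} [AddCommGroup G] [DecidableEq G]
    {Gd : Type*} [MeasurableSpace Gd] (μ : Measure Gd) [IsProbabilityMeasure μ]
    (e : AddChar G (Gd → ℂ)) (he : ∀ g ξ, ‖e g ξ‖ = 1)
    (F : lp (fun _ : G => ℂ) 2 ≃ₗᵢ[ℂ] Lp ℂ 2 μ)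
    (hF : ∀ g : G, (F (lp.single 2 g 1) : Gd → ℂ) =ᵐ[μ] e (-g))
    {N : ℕ}
    (𝒜 : PiLp 2 (fun _ : Fin N => ell2 G) →L[ℂ] PiLp 2 (fun _ : Fin N => ell2 G))
    (hlti : LTI 𝒜) (Λ : Gd → Matrix (Fin N) (Fin N) ℂ)
    (hΛ : IsTransfer μ F 𝒜 Λ) :
    ‖𝒜‖ ≤ specNormR (Matrix.of fun m n => (eLpNorm (fun ξ => Λ ξ m n) ∞ μ).toReal) := by
  obtain ⟨hmem, htr⟩ := hΛ
  set B : Matrix (Fin N) (Fin N) ℝ :=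
    Matrix.of fun m n => (eLpNorm (fun ξ => Λ ξ m n) ∞ μ).toReal with hB
  set C : ℝ := specNormR B with hCdef
  have hC : 0 ≤ C := norm_nonneg _
  refine ContinuousLinearMap.opNorm_le_bound _ hC fun x => ?_
  -- a.e. entrywise bounds on the transfer matrix
  have hae : ∀ᵐ ξ ∂μ, ∀ m n, ‖Λ ξ m n‖ ≤ B m n := by
    rw [ae_all_iff]
    intro m
    rw [ae_all_iff]
    intro n
    have h1 : ∀ᵐ ξ ∂μ, (‖Λ ξ m n‖₊ : ℝ≥0∞) ≤ eLpNormEssSup (fun ξ => Λ ξ m n) μ :=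
      ae_le_eLpNormEssSup
    filter_upwards [h1] with ξ hξ
    have hne : eLpNormEssSup (fun ξ => Λ ξ m n) μ ≠ ∞ := by
      have := (hmem m n).2
      rwa [eLpNorm_exponent_top, lt_top_iff_ne_top] at this
    have := ENNReal.toReal_mono hne hξ
    simpa [hB, eLpNorm_exponent_top] using this
  have haeT : ∀ᵐ ξ ∂μ, ∀ m, (F (𝒜 x m) : Gd → ℂ) ξ = ∑ n, Λ ξ m n * (F (x n) : Gd → ℂ) ξ :=
    ae_all_iff.mpr fun m => htr x m
  -- a.e. pointwise comparison of quadratic sums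
  have key : ∀ᵐ ξ ∂μ,
      ∑ m, (‖(F (𝒜 x m) : Gd → ℂ) ξ‖₊ : ℝ≥0∞) ^ 2 ≤
        ENNReal.ofReal (C ^ 2) * ∑ n, (‖(F (x n) : Gd → ℂ) ξ‖₊ : ℝ≥0∞) ^ 2 := by
    filter_upwards [hae, haeT] with ξ h1 h2
    have hpt := ptwise_est B (Λ ξ) (h1) (fun n => (F (x n) : Gd → ℂ) ξ)
    calc ∑ m, (‖(F (𝒜 x m) : Gd → ℂ) ξ‖₊ : ℝ≥0∞) ^ 2
        = ENNReal.ofReal (∑ m, ‖∑ n, Λ ξ m n * (F (x n) : Gd → ℂ) ξ‖ ^ 2) := by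
          rw [ENNReal.ofReal_sum_of_nonneg fun m _ => by positivity]
          refine Finset.sum_congr rfl fun m _ => ?_
          rw [h2 m, ENNReal.ofReal_pow (norm_nonneg _), ofReal_norm, enorm_eq_nnnorm]
      _ ≤ ENNReal.ofReal (C ^ 2 * ∑ n, ‖(F (x n) : Gd → ℂ) ξ‖ ^ 2) :=
          ENNReal.ofReal_le_ofReal hpt
      _ = ENNReal.ofReal (C ^ 2) * ∑ n, (‖(F (x n) : Gd → ℂ) ξ‖₊ : ℝ≥0∞) ^ 2 := by
          rw [ENNReal.ofReal_mul (by positivity),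
            ENNReal.ofReal_sum_of_nonneg fun n _ => by positivity]
          congr 1
          refine Finset.sum_congr rfl fun n _ => ?_
          rw [ENNReal.ofReal_pow (norm_nonneg _), ofReal_norm, enorm_eq_nnnorm]
  -- measurability facts
  have hmA : ∀ m : Fin N, AEMeasurable
      (fun ξ => (‖(F (𝒜 x m) : Gd → ℂ) ξ‖₊ : ℝ≥0∞) ^ 2) μ :=
    fun m => ((MeasureTheory.Lp.aestronglyMeasurable (F (𝒜 x m))).enorm).pow_const 2
  have hmx : ∀ n : Fin N, AEMeasurable
      (fun ξ => (‖(F (x n) : Gd → ℂ) ξ‖₊ : ℝ≥0∞) ^ 2) μ :=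
    fun n => ((MeasureTheory.Lp.aestronglyMeasurable (F (x n))).enorm).pow_const 2
  -- main chain of (in)equalities in ℝ≥0∞
  have main : ENNReal.ofReal (‖𝒜 x‖ ^ 2) ≤ ENNReal.ofReal ((C * ‖x‖) ^ 2) := by
    calc ENNReal.ofReal (‖𝒜 x‖ ^ 2)
        = ∑ m, ENNReal.ofReal (‖𝒜 x m‖ ^ 2) := by
          rw [PiLp.norm_sq_eq_of_L2,
            ENNReal.ofReal_sum_of_nonneg fun m _ => by positivity]
      _ = ∑ m, ∫⁻ ξ, (‖(F (𝒜 x m) : Gd → ℂ) ξ‖₊ : ℝ≥0∞) ^ 2 ∂μ := by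
          refine Finset.sum_congr rfl fun m _ => ?_
          rw [lp_sq (F (𝒜 x m)), LinearIsometryEquiv.norm_map]
      _ = ∫⁻ ξ, ∑ m, (‖(F (𝒜 x m) : Gd → ℂ) ξ‖₊ : ℝ≥0∞) ^ 2 ∂μ :=
          (lintegral_finset_sum' _ fun m _ => hmA m).symm
      _ ≤ ∫⁻ ξ, ENNReal.ofReal (C ^ 2) * ∑ n, (‖(F (x n) : Gd → ℂ) ξ‖₊ : ℝ≥0∞) ^ 2 ∂μ :=
          lintegral_mono_ae key
      _ = ENNReal.ofReal (C ^ 2) *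
            ∑ n, ∫⁻ ξ, (‖(F (x n) : Gd → ℂ) ξ‖₊ : ℝ≥0∞) ^ 2 ∂μ := by
          rw [lintegral_const_mul'' _ (Finset.aemeasurable_fun_sum _ fun n _ => hmx n),
            lintegral_finset_sum' _ fun n _ => hmx n]
      _ = ENNReal.ofReal ((C * ‖x‖) ^ 2) := by
          have : ∀ n : Fin N, ∫⁻ ξ, (‖(F (x n) : Gd → ℂ) ξ‖₊ : ℝ≥0∞) ^ 2 ∂μ
              = ENNReal.ofReal (‖x n‖ ^ 2) := fun n => by
            rw [lp_sq (F (x n)), LinearIsometryEquiv.norm_map]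
          simp_rw [this]
          rw [← ENNReal.ofReal_sum_of_nonneg fun n _ => by positivity,
            ← ENNReal.ofReal_mul (by positivity), ← PiLp.norm_sq_eq_of_L2, mul_pow]
  have hsq : ‖𝒜 x‖ ^ 2 ≤ (C * ‖x‖) ^ 2 :=
    (ENNReal.ofReal_le_ofReal_iff (by positivity)).mp main
  exact (pow_le_pow_iff_left₀ (norm_nonneg _) (by positivity) two_ne_zero).mp hsq
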